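/- (Claim ms2, non-blocking case) Let S be the non-blocking total evacuation cost. Then S attains its minimum over [v_1, v_n] at some vertex: there exists an index j with 1 ≤ j ≤ n such that S(v_j) ≤ S(x) for all x ∈ [v_1, v_n]. -/

import Mathlib

open Finset

/-- Non-blocking total evacuation cost of a sink at `x`: the supply at a vertex
coinciding with the sink evacuates in no time. -/
noncomputable def msCost (v w : ℕ → ℝ) (c τ : ℝ) (n : ℕ) (x : ℝ) : ℝ :=
  ∑ i ∈ Finset.Icc 1 n,
    (if v i = x then 0 else w i * τ * |x - v i| + (w i) ^ 2 / (2 * c))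

/-- Full cost without the sink discount. -/
noncomputable def msFull (v w : ℕ → ℝ) (c τ : ℝ) (n : ℕ) (x : ℝ) : ℝ :=
  ∑ i ∈ Finset.Icc 1 n, (w i * τ * |x - v i| + (w i) ^ 2 / (2 * c))

lemma msCost_le_msFull (v w : ℕ → ℝ) (c τ : ℝ) (n : ℕ) (x : ℝ)
    (hw : ∀ h, 1 ≤ h → h ≤ n → 0 < w h) (hc : 0 < c) (hτ : 0 < τ) :
    msCost v w c τ n x ≤ msFull v w c τ n x := by
  apply Finset.sum_le_sum
  intro i hi
  simp only [Finset.mem_Icc] at hi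
  have hwi := hw i hi.1 hi.2
  have h1 : 0 ≤ w i * τ * |x - v i| :=
    mul_nonneg (mul_nonneg hwi.le hτ.le) (abs_nonneg _)
  have h2 : 0 ≤ (w i) ^ 2 / (2 * c) := by positivity
  split <;> nlinarith

lemma msCost_eq_msFull (v w : ℕ → ℝ) (c τ : ℝ) (n : ℕ) (x : ℝ)
    (hx : ∀ i, 1 ≤ i → i ≤ n → v i ≠ x) :
    msCost v w c τ n x = msFull v w c τ n x := by
  apply Finset.sum_congr rfl
  intro i hi
  simp only [Finset.mem_Icc] at hi
  rw [if_neg (hx i hi.1 hi.2)]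

/-- Claim ms2, non-blocking case: the total evacuation cost attains its
minimum over [v_1, v_n] at some vertex. -/
theorem stmt13 (n : ℕ) (v w : ℕ → ℝ) (c τ : ℝ)
    (hn : 1 ≤ n)
    (hv1 : v 1 = 0) (hv : StrictMonoOn v (Set.Icc 1 n))
    (hw : ∀ h, 1 ≤ h → h ≤ n → 0 < w h) (hc : 0 < c) (hτ : 0 < τ) :
    ∃ j : ℕ, 1 ≤ j ∧ j ≤ n ∧
      ∀ x ∈ Set.Icc (v 1) (v n), msCost v w c τ n (v j) ≤ msCost v w c τ n x := by
  obtain ⟨j, hjmem, hjmin⟩ := Finset.exists_min_image (Finset.Icc 1 n)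
    (fun i => msCost v w c τ n (v i)) ⟨1, by simp [hn]⟩
  simp only [Finset.mem_Icc] at hjmem
  refine ⟨j, hjmem.1, hjmem.2, ?_⟩
  intro x hx
  by_cases hvx : ∃ i, 1 ≤ i ∧ i ≤ n ∧ v i = x
  · obtain ⟨i, hi1, hi2, hvi⟩ := hvx
    rw [← hvi]
    exact hjmin i (Finset.mem_Icc.mpr ⟨hi1, hi2⟩)
  · push_neg at hvx
    -- x is strictly between two consecutive vertices
    set T : Finset ℕ := (Finset.Icc 1 n).filter (fun i => v i < x) with hT
    have h1T : (1 : ℕ) ∈ T := by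
      refine Finset.mem_filter.mpr ⟨by simp [hn], ?_⟩
      exact lt_of_le_of_ne hx.1 (hvx 1 le_rfl hn)
    have hTne : T.Nonempty := ⟨1, h1T⟩
    set k := T.max' hTne with hk
    have hkT : k ∈ T := T.max'_mem hTne
    obtain ⟨hkIcc, hkx⟩ := Finset.mem_filter.mp hkT
    simp only [Finset.mem_Icc] at hkIcc
    have hkn : k < n := by
      rcases lt_or_eq_of_le hkIcc.2 with h | h
      · exact h
      · exfalso
        have : v n < x := h ▸ hkx
        have : x < v n := lt_of_le_of_ne hx.2 (fun he => hvx n hn le_rfl he.symm)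
        linarith
    have hk1 : k + 1 ≤ n := hkn
    have hbx : x < v (k + 1) := by
      have hnotmem : k + 1 ∉ T := fun hmem => by
        have := T.le_max' (k + 1) hmem
        omega
      have : ¬ v (k + 1) < x := fun hlt =>
        hnotmem (Finset.mem_filter.mpr ⟨Finset.mem_Icc.mpr ⟨by omega, hk1⟩, hlt⟩)
      exact lt_of_le_of_ne (not_lt.mp this) (fun he => hvx (k+1) (by omega) hk1 he.symm)
    set a := v k with ha
    set b := v (k + 1) with hb
    have hab : a < b := hv (Set.mem_Icc.mpr ⟨hkIcc.1, hkIcc.2⟩)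
      (Set.mem_Icc.mpr ⟨by omega, hk1⟩) (by omega)
    have hba : (0:ℝ) < b - a := by linarith
    set lam := (b - x) / (b - a) with hlam
    set mu := (x - a) / (b - a) with hmu
    have hlam0 : 0 ≤ lam := by
      apply div_nonneg <;> linarith
    have hmu0 : 0 ≤ mu := by
      apply div_nonneg <;> linarith
    have hsum1 : lam + mu = 1 := by
      rw [hlam, hmu, ← add_div]
      field_simp
      ring
    have hkey : lam * a + mu * b = x := by
      rw [hlam, hmu]
      field_simp
      ring
    -- affineness of msFull on [a,b]
    have haff : msFull v w c τ n x = lam * msFull v w c τ n a + mu * msFull v w c τ n b := by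
      unfold msFull
      rw [Finset.mul_sum, Finset.mul_sum, ← Finset.sum_add_distrib]
      apply Finset.sum_congr rfl
      intro i hi
      simp only [Finset.mem_Icc] at hi
      have habs : |x - v i| = lam * |a - v i| + mu * |b - v i| := by
        rcases le_or_gt i k with hik | hik
        · have hvi : v i ≤ a := by
            rcases lt_or_eq_of_le hik with h | h
            · exact (hv (Set.mem_Icc.mpr ⟨hi.1, hi.2⟩)
                (Set.mem_Icc.mpr ⟨hkIcc.1, hkIcc.2⟩) h).le
            · rw [h]
          rw [abs_of_nonneg (by linarith), abs_of_nonneg (by linarith),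
            abs_of_nonneg (by linarith)]
          linear_combination -hkey + v i * hsum1
        · have hvi : b ≤ v i := by
            rcases lt_or_eq_of_le (Nat.succ_le_of_lt hik) with h | h
            · exact (hv (Set.mem_Icc.mpr ⟨by omega, hk1⟩)
                (Set.mem_Icc.mpr ⟨hi.1, hi.2⟩) h).le
            · rw [← h]
          rw [abs_of_nonpos (by linarith), abs_of_nonpos (by linarith),
            abs_of_nonpos (by linarith)]
          linear_combination hkey - v i * hsum1
      rw [habs]
      linear_combination (-(w i ^ 2 / (2 * c))) * hsum1
    have hja : msCost v w c τ n (v j) ≤ msFull v w c τ n a :=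
      le_trans (hjmin k (Finset.mem_Icc.mpr hkIcc))
        (msCost_le_msFull v w c τ n a hw hc hτ)
    have hjb : msCost v w c τ n (v j) ≤ msFull v w c τ n b :=
      le_trans (hjmin (k+1) (Finset.mem_Icc.mpr ⟨by omega, hk1⟩))
        (msCost_le_msFull v w c τ n b hw hc hτ)
    rw [msCost_eq_msFull v w c τ n x hvx, haff]
    have heq : msCost v w c τ n (v j)
        = lam * msCost v w c τ n (v j) + mu * msCost v w c τ n (v j) := by
      linear_combination (-(msCost v w c τ n (v j))) * hsum1
    rw [heq]
    exact add_le_add (mul_le_mul_of_nonneg_left hja hlam0)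
      (mul_le_mul_of_nonneg_left hjb hmu0)
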